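/- Let 2 < m < n, let r ≥ 3 be odd, and let x be the smallest nonnegative integer for which m divides (1 + n(m-1) + n(m-1)(n-1) + ⋯ + n(m-1)^{(r-1)/2}(n-1)^{(r-3)/2} + x)·n. Then every bipartite biregular graph with degrees m and n and girth 2r has at least (1 + n(m-1) + ⋯ + n(m-1)^{(r-1)/2}(n-1)^{(r-3)/2} + x)·(1 + n/m) vertices. -/

import Mathlib

open SimpleGraph

private lemma aux_walk_parity {V : Type*} {Γ : SimpleGraph V} {S L : Finset V}
    (hpart : ∀ v : V, v ∈ S ↔ v ∉ L)
    (hbip : ∀ ⦃u v : V⦄, Γ.Adj u v → (u ∈ S ∧ v ∈ L) ∨ (u ∈ L ∧ v ∈ S)) :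
    ∀ {a b : V} (p : Γ.Walk a b), ((a ∈ S) ↔ (b ∈ S)) ↔ Even p.length := by
  intro a b p
  induction p with
  | nil => simp
  | @cons a c b h q ih =>
    have hac : (a ∈ S) ↔ (c ∉ S) := by
      have h1 := hbip h
      have h3 := hpart a
      have h4 := hpart c
      tauto
    rw [Walk.length_cons, Nat.even_add_one, ← ih]
    by_cases hA : a ∈ S <;> by_cases hC : c ∈ S <;> by_cases hB : b ∈ S <;> simp_all

private lemma aux_cycle_ge_girth {V : Type*} {Γ : SimpleGraph V} {g : ℕ} (hg : Γ.girth = g)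
    (hg0 : g ≠ 0) {a : V} {c : Γ.Walk a a} (hc : c.IsCycle) : g ≤ c.length := by
  have h1 : Γ.egirth ≤ (c.length : ℕ∞) := by
    rw [SimpleGraph.egirth]
    exact iInf₂_le_of_le a c (iInf_le_of_le hc le_rfl)
  have h2 : Γ.egirth ≠ ⊤ := by
    intro h
    rw [SimpleGraph.girth, h] at hg
    simp at hg
    exact hg0 hg.symm
  rw [SimpleGraph.girth] at hg
  rw [← ENat.coe_toNat h2, hg] at h1
  exact_mod_cast h1
private lemma aux_walk_cases {V : Type*} {Γ : SimpleGraph V} {a b : V} (p : Γ.Walk a b)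
    (h : p.length ≠ 0) :
    ∃ c, ∃ (_ : Γ.Adj a c) (q : Γ.Walk c b), p.length = q.length + 1 := by
  cases p with
  | nil => simp at h
  | cons hadj q => exact ⟨_, hadj, q, rfl⟩

private lemma aux_dist_adj {V : Type*} {Γ : SimpleGraph V} {v u z : V} (h : Γ.Adj u z)
    (hr : Γ.Reachable v u) : Γ.dist v z ≤ Γ.dist v u + 1 := by
  obtain ⟨p, hp⟩ := hr.exists_walk_length_eq_dist
  have := Γ.dist_le (p.concat h)
  rwa [Walk.length_concat, hp] at this

private lemma aux_exists_down {V : Type*} {Γ : SimpleGraph V} {v w : V} {j : ℕ}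
    (hr : Γ.Reachable v w) (hj : Γ.dist v w = j) (hj1 : 1 ≤ j) :
    ∃ u, Γ.Adj u w ∧ Γ.Reachable v u ∧ Γ.dist v u = j - 1 := by
  obtain ⟨p, hp⟩ := hr.exists_walk_length_eq_dist
  have hlen : p.reverse.length ≠ 0 := by rw [Walk.length_reverse]; omega
  obtain ⟨c, hadj, q, hq⟩ := aux_walk_cases p.reverse hlen
  rw [Walk.length_reverse, hp, hj] at hq
  refine ⟨c, hadj.symm, ⟨q.reverse⟩, ?_⟩
  have h1 : Γ.dist v c ≤ j - 1 := by
    have := Γ.dist_le q.reverse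
    rw [Walk.length_reverse] at this
    omega
  have h2 : Γ.dist v w ≤ Γ.dist v c + 1 := aux_dist_adj hadj.symm ⟨q.reverse⟩
  omega
private lemma aux_unique_down {V : Type*} [DecidableEq V] {Γ : SimpleGraph V} {g : ℕ} (hg : Γ.girth = g)
    (hg0 : g ≠ 0) {v w u1 u2 : V} {j : ℕ} (hj : Γ.dist v w = j) (hj1 : 1 ≤ j) (h2j : 2 * j < g)
    (h1 : Γ.Adj u1 w) (h2 : Γ.Adj u2 w)
    (hr1 : Γ.Reachable v u1) (hr2 : Γ.Reachable v u2)
    (hd1 : Γ.dist v u1 = j - 1) (hd2 : Γ.dist v u2 = j - 1) : u1 = u2 := by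
  by_contra hne
  obtain ⟨q1, hq1⟩ := hr1.exists_walk_length_eq_dist
  obtain ⟨q2, hq2⟩ := hr2.exists_walk_length_eq_dist
  set q : Γ.Walk u1 u2 := q1.reverse.append q2 with hqdef
  set p := q.bypass with hpdef
  have hpl : p.length ≤ 2 * (j - 1) := by
    have h3 : p.length ≤ q.length := q.length_bypass_le
    have h4 : q.length = q1.length + q2.length := by
      rw [hqdef, Walk.length_append, Walk.length_reverse]
    rw [hd1] at hq1; rw [hd2] at hq2
    omega
  have hsupp : ∀ z ∈ p.support, Γ.dist v z ≤ j - 1 := by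
    intro z hz
    have hz' := q.support_bypass_subset hz
    rw [hqdef, Walk.mem_support_append_iff] at hz'
    rcases hz' with h' | h'
    · rw [Walk.support_reverse, List.mem_reverse] at h'
      have := Γ.dist_le (q1.takeUntil z h')
      have := q1.length_takeUntil_le h'
      omega
    · have := Γ.dist_le (q2.takeUntil z h')
      have := q2.length_takeUntil_le h'
      omega
  have hwp : w ∉ p.support := by
    intro hw
    have := hsupp w hw
    omega
  have hwu1 : w ≠ u1 := by rintro rfl; omega
  have hwu2 : w ≠ u2 := by rintro rfl; omega
  have hpath : (Walk.cons h1.symm p).IsPath :=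
    (q.bypass_isPath).cons hwp
  have hcyc : (Walk.cons h2 (Walk.cons h1.symm p)).IsCycle := by
    rw [Walk.cons_isCycle_iff]
    refine ⟨hpath, ?_⟩
    rw [Walk.edges_cons]
    intro hmem
    rcases List.mem_cons.mp hmem with he | he
    · rw [Sym2.eq_iff] at he
      rcases he with ⟨rfl, rfl⟩ | ⟨rfl, -⟩
      · exact hwu1 rfl
      · exact hne rfl
    · exact hwp (Walk.snd_mem_support_of_mem_edges p he)
  have := aux_cycle_ge_girth hg hg0 hcyc
  simp only [Walk.length_cons] at this
  omega
private lemma aux_moore {V : Type*} [Fintype V] (Γ : SimpleGraph V) [DecidableRel Γ.Adj]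
    (S L : Finset V) (m n k : ℕ) (hk : 1 ≤ k)
    (hpart : ∀ v : V, v ∈ S ↔ v ∉ L)
    (hbip : ∀ ⦃u v : V⦄, Γ.Adj u v → (u ∈ S ∧ v ∈ L) ∨ (u ∈ L ∧ v ∈ S))
    (hS : ∀ v ∈ S, Γ.degree v = n)
    (hL : ∀ v ∈ L, Γ.degree v = m)
    (hgirth : Γ.girth = 2 * (2 * k + 1)) :
    1 + ∑ i ∈ Finset.range k, n * (m - 1) ^ (i + 1) * (n - 1) ^ i ≤ S.card := by
  classical
  have hg0 : (2 * (2 * k + 1)) ≠ 0 := by omega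
  have hnotacyclic : ¬ Γ.IsAcyclic := by
    intro h
    rw [h.girth_eq_zero] at hgirth
    omega
  obtain ⟨a, c, hc, -⟩ := (SimpleGraph.exists_girth_eq_length).mpr hnotacyclic
  obtain ⟨b, hab, -, -⟩ := aux_walk_cases c (by have := hc.three_le_length; omega)
  have hvS : ∃ v, v ∈ S := by
    rcases hbip hab with ⟨h1, -⟩ | ⟨-, h2⟩
    exacts [⟨a, h1⟩, ⟨b, h2⟩]
  obtain ⟨v, hv⟩ := hvS
  set B : ℕ → Finset V :=
    fun j => Finset.univ.filter (fun w => Γ.Reachable v w ∧ Γ.dist v w = j) with hBdef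
  have hmemB : ∀ j w, w ∈ B j ↔ Γ.Reachable v w ∧ Γ.dist v w = j := by
    intro j w; simp [hBdef]
  have hclass : ∀ w, Γ.Reachable v w → (w ∈ S ↔ Even (Γ.dist v w)) := by
    intro w hw
    obtain ⟨p, hp⟩ := hw.exists_walk_length_eq_dist
    have h := aux_walk_parity hpart hbip p
    rw [hp] at h
    tauto
  have hadjlevel : ∀ u z, Γ.Reachable v u → Γ.Adj u z →
      Γ.dist v z = Γ.dist v u + 1 ∨ Γ.dist v z + 1 = Γ.dist v u := by
    intro u z hru hadj
    have hrz : Γ.Reachable v z := hru.trans ⟨hadj.toWalk⟩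
    have h1 := aux_dist_adj hadj hru
    have h2 := aux_dist_adj hadj.symm hrz
    have hp1 := hclass u hru
    have hp2 := hclass z hrz
    have hsz : (u ∈ S) ↔ (z ∉ S) := by
      have := hbip hadj; have := hpart u; have := hpart z; tauto
    have hpar : Even (Γ.dist v u) ↔ ¬ Even (Γ.dist v z) := by tauto
    rw [Nat.even_iff, Nat.even_iff] at hpar
    omega
  have hstep : ∀ j, 1 ≤ j → j + 1 ≤ 2 * k →
      (B j).card * ((if Even j then n else m) - 1) ≤ (B (j + 1)).card := by
    intro j hj1 hj2
    have hdeg : ∀ u ∈ B j,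
        (if Even j then n else m) - 1 ≤ ((B (j+1)).filter (fun w => Γ.Adj u w)).card := by
      intro u hu
      rw [hmemB] at hu
      obtain ⟨hru, hdu⟩ := hu
      obtain ⟨u0, hu0adj, hu0r, hu0d⟩ := aux_exists_down hru hdu hj1
      have hsub : Γ.neighborFinset u \ {u0} ⊆ (B (j+1)).filter (fun w => Γ.Adj u w) := by
        intro z hz
        rw [Finset.mem_sdiff, SimpleGraph.mem_neighborFinset, Finset.mem_singleton] at hz
        obtain ⟨hadj, hne⟩ := hz
        have hrz : Γ.Reachable v z := hru.trans ⟨hadj.toWalk⟩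
        rcases hadjlevel u z hru hadj with h' | h'
        · rw [Finset.mem_filter, hmemB]
          exact ⟨⟨hrz, by omega⟩, hadj⟩
        · exact absurd
            (aux_unique_down hgirth hg0 hdu hj1 (by omega) hadj.symm hu0adj hrz hu0r
              (by omega) hu0d) hne
      have hsing : {u0} ⊆ Γ.neighborFinset u := by
        simp only [Finset.singleton_subset_iff, SimpleGraph.mem_neighborFinset]
        exact hu0adj.symm
      have hcard : (Γ.neighborFinset u \ {u0}).card = Γ.degree u - 1 := by
        rw [Finset.card_sdiff_of_subset hsing, Finset.card_singleton]
        rfl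
      have hdegu : Γ.degree u = if Even j then n else m := by
        by_cases he : Even j
        · have huS : u ∈ S := (hclass u hru).mpr (by rw [hdu]; exact he)
          simp [he, hS u huS]
        · have huS : u ∉ S := fun h => he (by rw [← hdu]; exact (hclass u hru).mp h)
          have huL : u ∈ L := by have := hpart u; tauto
          simp [he, hL u huL]
      calc (if Even j then n else m) - 1 = (Γ.neighborFinset u \ {u0}).card := by
            rw [hcard, hdegu]
        _ ≤ _ := Finset.card_le_card hsub
    have hup : ∀ w ∈ B (j+1), ((B j).filter (fun u => Γ.Adj u w)).card ≤ 1 := by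
      intro w hw
      rw [hmemB] at hw
      obtain ⟨hrw, hdw⟩ := hw
      rw [Finset.card_le_one]
      intro a1 ha1 a2 ha2
      rw [Finset.mem_filter, hmemB] at ha1 ha2
      exact aux_unique_down hgirth hg0 hdw (by omega) (by omega) ha1.2 ha2.2 ha1.1.1 ha2.1.1
        (by omega) (by omega)
    calc (B j).card * ((if Even j then n else m) - 1)
        = ∑ _u ∈ B j, ((if Even j then n else m) - 1) := by
          rw [Finset.sum_const, smul_eq_mul, mul_comm]
      _ ≤ ∑ u ∈ B j, ((B (j+1)).filter (fun w => Γ.Adj u w)).card := Finset.sum_le_sum hdeg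
      _ = ∑ u ∈ B j, ∑ w ∈ B (j+1), (if Γ.Adj u w then 1 else 0) := by
          refine Finset.sum_congr rfl fun u _ => ?_
          rw [Finset.card_filter]
      _ = ∑ w ∈ B (j+1), ∑ u ∈ B j, (if Γ.Adj u w then 1 else 0) := Finset.sum_comm
      _ = ∑ w ∈ B (j+1), ((B j).filter (fun u => Γ.Adj u w)).card := by
          refine Finset.sum_congr rfl fun w _ => ?_
          rw [Finset.card_filter]
      _ ≤ ∑ _w ∈ B (j+1), 1 := Finset.sum_le_sum hup
      _ = (B (j+1)).card := by simp
  have hB1 : n ≤ (B 1).card := by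
    have hsub : Γ.neighborFinset v ⊆ B 1 := by
      intro z hz
      rw [SimpleGraph.mem_neighborFinset] at hz
      rw [hmemB]
      refine ⟨⟨hz.toWalk⟩, ?_⟩
      have h1 : Γ.dist v z ≤ 1 := by
        have := Γ.dist_le hz.toWalk
        simpa using this
      have h2 : Γ.dist v z ≠ 0 := by
        intro h0
        exact hz.ne ((Reachable.dist_eq_zero_iff ⟨hz.toWalk⟩).mp h0)
      omega
    calc n = Γ.degree v := (hS v hv).symm
      _ ≤ (B 1).card := Finset.card_le_card hsub
  have hchain : ∀ i, i < k → n * (m - 1) ^ (i + 1) * (n - 1) ^ i ≤ (B (2 * (i + 1))).card := by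
    intro i
    induction i with
    | zero =>
      intro _
      have h1 := hstep 1 le_rfl (by omega)
      norm_num at h1
      calc n * (m-1)^(0+1) * (n-1)^0 = n * (m-1) := by ring
        _ ≤ (B 1).card * (m-1) := Nat.mul_le_mul_right _ hB1
        _ ≤ (B (1+1)).card := h1
        _ = (B (2*(0+1))).card := by norm_num
    | succ i ih =>
      intro h
      have hih := ih (by omega)
      have h1 := hstep (2*(i+1)) (by omega) (by omega)
      have h2 := hstep (2*(i+1)+1) (by omega) (by omega)
      rw [if_pos (even_two_mul _)] at h1
      rw [if_neg (by simp [Nat.even_add_one])] at h2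
      calc n * (m-1)^(i+1+1) * (n-1)^(i+1)
          = (n * (m-1)^(i+1) * (n-1)^i) * ((n-1) * (m-1)) := by ring
        _ ≤ (B (2*(i+1))).card * ((n-1)*(m-1)) := Nat.mul_le_mul_right _ hih
        _ = ((B (2*(i+1))).card * (n-1)) * (m-1) := by ring
        _ ≤ (B (2*(i+1)+1)).card * (m-1) := Nat.mul_le_mul_right _ h1
        _ ≤ (B (2*(i+1)+1+1)).card := h2
        _ = (B (2*(i+1+1))).card := by rw [show 2*(i+1)+1+1 = 2*(i+1+1) by ring]
  have hBsubS : ∀ i : ℕ, ∀ w ∈ B (2*i), w ∈ S := by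
    intro i w hw
    rw [hmemB] at hw
    exact (hclass w hw.1).mpr (by rw [hw.2]; exact even_two_mul i)
  have hfinal : ∑ i ∈ Finset.range (k+1), (B (2*i)).card ≤ S.card := by
    rw [← Finset.card_biUnion]
    · apply Finset.card_le_card
      intro w hw
      rw [Finset.mem_biUnion] at hw
      obtain ⟨i, -, hw⟩ := hw
      exact hBsubS i w hw
    · intro i1 _ i2 _ hne
      rw [Function.onFun, Finset.disjoint_left]
      intro w hw1 hw2
      rw [hmemB] at hw1 hw2
      have := hw1.2
      have := hw2.2
      have : i1 = i2 := by omega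
      exact hne this
  have hB0 : 1 ≤ (B 0).card := by
    have hvB : v ∈ B 0 := by
      rw [hmemB]
      exact ⟨Reachable.refl v, SimpleGraph.dist_self⟩
    exact Finset.card_pos.mpr ⟨v, hvB⟩
  calc 1 + ∑ i ∈ Finset.range k, n * (m - 1) ^ (i + 1) * (n - 1) ^ i
      ≤ ∑ i ∈ Finset.range (k+1), (B (2*i)).card := by
        rw [Finset.sum_range_succ']
        have hsum := Finset.sum_le_sum (fun i hi => hchain i (Finset.mem_range.mp hi))
        have hB0' : (1:ℕ) ≤ (B (2*0)).card := by simpa using hB0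
        omega
    _ ≤ S.card := hfinal

private lemma aux_handshake {V : Type*} [Fintype V] (Γ : SimpleGraph V) [DecidableRel Γ.Adj]
    (S L : Finset V)
    (hpart : ∀ v : V, v ∈ S ↔ v ∉ L)
    (hbip : ∀ ⦃u v : V⦄, Γ.Adj u v → (u ∈ S ∧ v ∈ L) ∨ (u ∈ L ∧ v ∈ S))
    (m n : ℕ)
    (hS : ∀ v ∈ S, Γ.degree v = n)
    (hL : ∀ v ∈ L, Γ.degree v = m) : S.card * n = L.card * m := by
  classical
  have h1 : ∀ u ∈ S, (L.filter (fun w => Γ.Adj u w)).card = n := by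
    intro u hu
    have he : L.filter (fun w => Γ.Adj u w) = Γ.neighborFinset u := by
      ext w
      simp only [Finset.mem_filter, SimpleGraph.mem_neighborFinset]
      constructor
      · exact fun h => h.2
      · intro h
        have := hbip h
        have := hpart u
        tauto
    rw [he]
    exact hS u hu
  have h2 : ∀ w ∈ L, (S.filter (fun u => Γ.Adj u w)).card = m := by
    intro w hw
    have he : S.filter (fun u => Γ.Adj u w) = Γ.neighborFinset w := by
      ext u
      simp only [Finset.mem_filter, SimpleGraph.mem_neighborFinset]
      constructor
      · exact fun h => h.2.symm
      · intro h
        have := hbip h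
        have := hpart w
        exact ⟨by tauto, h.symm⟩
    rw [he]
    exact hL w hw
  calc S.card * n = ∑ _u ∈ S, n := by rw [Finset.sum_const, smul_eq_mul, mul_comm]
    _ = ∑ u ∈ S, (L.filter (fun w => Γ.Adj u w)).card := (Finset.sum_congr rfl h1).symm
    _ = ∑ u ∈ S, ∑ w ∈ L, (if Γ.Adj u w then 1 else 0) := by
        refine Finset.sum_congr rfl fun u _ => ?_; rw [Finset.card_filter]
    _ = ∑ w ∈ L, ∑ u ∈ S, (if Γ.Adj u w then 1 else 0) := Finset.sum_comm
    _ = ∑ w ∈ L, (S.filter (fun u => Γ.Adj u w)).card := by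
        refine Finset.sum_congr rfl fun w _ => ?_; rw [Finset.card_filter]
    _ = ∑ _w ∈ L, m := Finset.sum_congr rfl h2
    _ = L.card * m := by rw [Finset.sum_const, smul_eq_mul, mul_comm]

/-- Let `2 < m < n`, `r = 2k+1 ≥ 3` odd, and let `x` be the smallest nonnegative integer for
which `m` divides `(1 + n(m-1) + n(m-1)²(n-1) + ⋯ + n(m-1)^{(r-1)/2}(n-1)^{(r-3)/2} + x)·n`.
Then every bipartite biregular graph with degrees `m` and `n` and girth `2r` has at least
`(1 + ⋯ + x)·(1 + n/m)` vertices, i.e. `(|S| + |L|)·m ≥ (T + x)·(m + n)`. -/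
theorem stmt6 {V : Type*} [Fintype V] (Γ : SimpleGraph V) [DecidableRel Γ.Adj]
    (S L : Finset V) (m n r k x : ℕ) (hm : 2 < m) (hmn : m < n)
    (hr : r = 2 * k + 1) (hk : 1 ≤ k)
    (hx : m ∣ (1 + ∑ i ∈ Finset.range k, n * (m - 1) ^ (i + 1) * (n - 1) ^ i + x) * n)
    (hxmin : ∀ y < x, ¬ m ∣ (1 + ∑ i ∈ Finset.range k, n * (m - 1) ^ (i + 1) * (n - 1) ^ i + y) * n)
    (hpart : ∀ v : V, v ∈ S ↔ v ∉ L)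
    (hbip : ∀ ⦃u v : V⦄, Γ.Adj u v → (u ∈ S ∧ v ∈ L) ∨ (u ∈ L ∧ v ∈ S))
    (hS : ∀ v ∈ S, Γ.degree v = n)
    (hL : ∀ v ∈ L, Γ.degree v = m)
    (hgirth : Γ.girth = (2 * r : ℕ)) :
    (1 + ∑ i ∈ Finset.range k, n * (m - 1) ^ (i + 1) * (n - 1) ^ i + x) * (m + n) ≤
      (S.card + L.card) * m := by
  classical
  have hgirth' : Γ.girth = 2 * (2 * k + 1) := by rw [hgirth, hr]
  have hTS := aux_moore Γ S L m n k hk hpart hbip hS hL hgirth'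
  have hSL : S.card * n = L.card * m := aux_handshake Γ S L hpart hbip m n hS hL
  set T := 1 + ∑ i ∈ Finset.range k, n * (m - 1) ^ (i + 1) * (n - 1) ^ i with hT
  have hdvd : m ∣ S.card * n := by
    rw [hSL]
    exact dvd_mul_left m L.card
  have hTx : T + x ≤ S.card := by
    by_contra hcon
    push_neg at hcon
    exact hxmin (S.card - T) (by omega)
      (by rw [show T + (S.card - T) = S.card from by omega]; exact hdvd)
  calc (T + x) * (m + n) ≤ S.card * (m + n) := Nat.mul_le_mul_right _ hTx
    _ = S.card * m + S.card * n := by ring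
    _ = S.card * m + L.card * m := by rw [hSL]
    _ = (S.card + L.card) * m := by ring
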